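/- Let γ = (γ₁, γ₂) with γ₁ ≥ 0 and γ₂ − ϰ ≥ 0, ϰ ≥ 0, and define e_{γ,ϰ}(a,b) = C·e^{γ₁[a−b]}·max([a−b],1)^{γ₂}·min(⟨a⟩,⟨b⟩)^ϰ, where ⟨a⟩ = max(|a|,1). Then there exists a constant C (depending only on γ₂ and ϰ) such that e_{γ,ϰ}(a,b) ≤ e_{γ,0}(a,c)·e_{γ,ϰ}(c,b) for all a,b,c ∈ ℤ^d. -/

import Mathlib

open scoped BigOperators

/-- Euclidean norm on `ℤ^d`. -/
noncomputable def znorm {d : ℕ} (a : Fin d → ℤ) : ℝ :=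
  Real.sqrt (∑ i, ((a i : ℝ)) ^ 2)

/-- The pseudo-metric `[a−b] = min(|a−b|, |a+b|)` on `ℤ^d`. -/
noncomputable def pdist {d : ℕ} (a b : Fin d → ℤ) : ℝ :=
  min (znorm (a - b)) (znorm (a + b))

/-- `⟨a⟩ = max(|a|,1)`. -/
noncomputable def zbk {d : ℕ} (a : Fin d → ℤ) : ℝ := max (znorm a) 1

/-- The weight `e_{γ,ϰ}(a,b) = C e^{γ₁[a−b]} max([a−b],1)^{γ₂} min(⟨a⟩,⟨b⟩)^ϰ`. -/
noncomputable def eWeight {d : ℕ} (C γ₁ γ₂ ϰ : ℝ) (a b : Fin d → ℤ) : ℝ :=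
  C * Real.exp (γ₁ * pdist a b) * (max (pdist a b) 1) ^ γ₂ *
    (min (zbk a) (zbk b)) ^ ϰ

namespace EWAux

variable {d : ℕ}

/-- Lift to Euclidean space. -/
noncomputable def lift (a : Fin d → ℤ) : EuclideanSpace ℝ (Fin d) := WithLp.toLp 2 (fun i => (a i : ℝ))

lemma znorm_eq (a : Fin d → ℤ) : znorm a = ‖lift a‖ := by
  rw [EuclideanSpace.norm_eq, znorm]
  congr 1
  refine Finset.sum_congr rfl fun i _ => ?_
  rw [Real.norm_eq_abs, sq_abs]
  rfl

lemma lift_add (a b : Fin d → ℤ) : lift (a + b) = lift a + lift b := by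
  ext i; simp [lift]

lemma lift_sub (a b : Fin d → ℤ) : lift (a - b) = lift a - lift b := by
  ext i; simp [lift]

lemma znorm_nonneg (a : Fin d → ℤ) : 0 ≤ znorm a := by
  rw [znorm_eq]; exact norm_nonneg _

lemma pdist_nonneg (a b : Fin d → ℤ) : 0 ≤ pdist a b :=
  le_min (znorm_nonneg _) (znorm_nonneg _)

lemma pdist_comm (a b : Fin d → ℤ) : pdist a b = pdist b a := by
  unfold pdist
  rw [znorm_eq (a - b), znorm_eq (b - a), lift_sub, lift_sub, norm_sub_rev,
    add_comm a b]

lemma pdist_triangle (a b c : Fin d → ℤ) : pdist a b ≤ pdist a c + pdist c b := by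
  have hab1 : znorm (a - b) = ‖lift a - lift b‖ := by rw [znorm_eq, lift_sub]
  have hab2 : znorm (a + b) = ‖lift a + lift b‖ := by rw [znorm_eq, lift_add]
  have hac1 : znorm (a - c) = ‖lift a - lift c‖ := by rw [znorm_eq, lift_sub]
  have hac2 : znorm (a + c) = ‖lift a + lift c‖ := by rw [znorm_eq, lift_add]
  have hcb1 : znorm (c - b) = ‖lift c - lift b‖ := by rw [znorm_eq, lift_sub]
  have hcb2 : znorm (c + b) = ‖lift c + lift b‖ := by rw [znorm_eq, lift_add]
  set A := lift a; set B := lift b; set Cc := lift c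
  unfold pdist
  rw [hab1, hab2, hac1, hac2, hcb1, hcb2]
  rcases le_total ‖A - Cc‖ ‖A + Cc‖ with h1 | h1 <;>
    rcases le_total ‖Cc - B‖ ‖Cc + B‖ with h2 | h2
  · rw [min_eq_left h1, min_eq_left h2]
    refine le_trans (min_le_left _ _) ?_
    calc ‖A - B‖ = ‖(A - Cc) + (Cc - B)‖ := by abel_nf
      _ ≤ ‖A - Cc‖ + ‖Cc - B‖ := norm_add_le _ _
  · rw [min_eq_left h1, min_eq_right h2]
    refine le_trans (min_le_right _ _) ?_
    calc ‖A + B‖ = ‖(A - Cc) + (Cc + B)‖ := by abel_nf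
      _ ≤ ‖A - Cc‖ + ‖Cc + B‖ := norm_add_le _ _
  · rw [min_eq_right h1, min_eq_left h2]
    refine le_trans (min_le_right _ _) ?_
    calc ‖A + B‖ = ‖(A + Cc) - (Cc - B)‖ := by abel_nf
      _ ≤ ‖A + Cc‖ + ‖Cc - B‖ := norm_sub_le _ _
  · rw [min_eq_right h1, min_eq_right h2]
    refine le_trans (min_le_left _ _) ?_
    calc ‖A - B‖ = ‖(A + Cc) - (Cc + B)‖ := by abel_nf
      _ ≤ ‖A + Cc‖ + ‖Cc + B‖ := norm_sub_le _ _

lemma one_le_zbk (a : Fin d → ℤ) : 1 ≤ zbk a := le_max_right _ _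

lemma zbk_le (a c : Fin d → ℤ) : zbk a ≤ zbk c + pdist a c := by
  have hac1 : znorm (a - c) = ‖lift a - lift c‖ := by rw [znorm_eq, lift_sub]
  have hac2 : znorm (a + c) = ‖lift a + lift c‖ := by rw [znorm_eq, lift_add]
  have t1 : ‖lift a‖ ≤ ‖lift c‖ + ‖lift a - lift c‖ := by
    have e : lift c + (lift a - lift c) = lift a := by abel
    have h := norm_add_le (lift c) (lift a - lift c)
    rw [e] at h; exact h
  have t2 : ‖lift a‖ ≤ ‖lift c‖ + ‖lift a + lift c‖ := by
    have e : lift a + lift c - lift c = lift a := by abel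
    have h := norm_sub_le (lift a + lift c) (lift c)
    rw [e] at h; linarith
  have h1 : znorm a ≤ znorm c + pdist a c := by
    rw [znorm_eq a, znorm_eq c]
    unfold pdist
    rw [hac1, hac2]
    rcases le_total ‖lift a - lift c‖ ‖lift a + lift c‖ with h | h
    · rw [min_eq_left h]; linarith
    · rw [min_eq_right h]; linarith
  have h2 : znorm c ≤ zbk c := le_max_left _ _
  have h3 := pdist_nonneg a c
  have h4 := one_le_zbk c
  exact max_le (by linarith) (by linarith)

end EWAux

/-- If `γ₁ ≥ 0` and `γ₂ − ϰ ≥ 0`, `ϰ ≥ 0`, then for a sufficiently large constant `C`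
(depending only on `γ₂` and `ϰ`) one has `e_{γ,ϰ}(a,b) ≤ e_{γ,0}(a,c)·e_{γ,ϰ}(c,b)`
for all `a, b, c ∈ ℤ^d`. -/
theorem eWeight_submultiplicative (d : ℕ) (γ₁ γ₂ ϰ : ℝ)
    (hγ₁ : 0 ≤ γ₁) (hϰ : 0 ≤ ϰ) (hγ₂ϰ : 0 ≤ γ₂ - ϰ) :
    ∃ C : ℝ, 1 ≤ C ∧ ∀ a b c : Fin d → ℤ,
      eWeight C γ₁ γ₂ ϰ a b ≤ eWeight C γ₁ γ₂ 0 a c * eWeight C γ₁ γ₂ ϰ c b := by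
  open EWAux in
  have hγ₂ : 0 ≤ γ₂ := by linarith
  refine ⟨(2 : ℝ) ^ (γ₂ + ϰ), ?_, ?_⟩
  · exact Real.one_le_rpow (by norm_num) (by linarith)
  intro a b c
  set C : ℝ := (2 : ℝ) ^ (γ₂ + ϰ) with hC
  have hC1 : (1 : ℝ) ≤ C := Real.one_le_rpow (by norm_num) (by linarith)
  have hC0 : (0 : ℝ) ≤ C := by linarith
  set M : ℝ := max (pdist a b) 1 with hMdef
  set M1 : ℝ := max (pdist a c) 1 with hM1def
  set M2 : ℝ := max (pdist c b) 1 with hM2def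
  set m' : ℝ := min (zbk a) (zbk b) with hm'def
  set m : ℝ := min (zbk c) (zbk b) with hmdef
  have h1M : (1:ℝ) ≤ M := le_max_right _ _
  have h1M1 : (1:ℝ) ≤ M1 := le_max_right _ _
  have h1M2 : (1:ℝ) ≤ M2 := le_max_right _ _
  have h1m : (1:ℝ) ≤ m := le_min (EWAux.one_le_zbk c) (EWAux.one_le_zbk b)
  have h1m' : (1:ℝ) ≤ m' := le_min (EWAux.one_le_zbk a) (EWAux.one_le_zbk b)
  have hmax1 : (1:ℝ) ≤ max M1 M2 := le_trans h1M1 (le_max_left _ _)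
  have hmin1 : (1:ℝ) ≤ min M1 M2 := le_min h1M1 h1M2
  -- exponential part
  have hEexp : Real.exp (γ₁ * pdist a b) ≤
      Real.exp (γ₁ * pdist a c) * Real.exp (γ₁ * pdist c b) := by
    rw [← Real.exp_add]
    refine Real.exp_le_exp.mpr ?_
    calc γ₁ * pdist a b ≤ γ₁ * (pdist a c + pdist c b) :=
          mul_le_mul_of_nonneg_left (EWAux.pdist_triangle a b c) hγ₁
      _ = γ₁ * pdist a c + γ₁ * pdist c b := mul_add _ _ _
  -- bound on M
  have hM : M ≤ 2 * max M1 M2 := by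
    refine max_le ?_ (by linarith)
    calc pdist a b ≤ pdist a c + pdist c b := EWAux.pdist_triangle a b c
      _ ≤ M1 + M2 := add_le_add (le_max_left _ _) (le_max_left _ _)
      _ ≤ max M1 M2 + max M1 M2 := add_le_add (le_max_left _ _) (le_max_right _ _)
      _ = 2 * max M1 M2 := by ring
  -- bound on m'
  have hm : m' ≤ 2 * (m * min M1 M2) := by
    rcases le_total (zbk b) (zbk c) with h | h
    · have hmeq : m = zbk b := min_eq_right h
      have : m' ≤ zbk b := min_le_right _ _
      nlinarith [EWAux.one_le_zbk b]
    · have hmeq : m = zbk c := min_eq_left h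
      have ha : m' ≤ 2 * (m * M1) := by
        have h1 : m' ≤ zbk a := min_le_left _ _
        have h2 : zbk a ≤ zbk c + pdist a c := EWAux.zbk_le a c
        have h3 : pdist a c ≤ M1 := le_max_left _ _
        have h4 : (1:ℝ) ≤ zbk c := EWAux.one_le_zbk c
        rw [hmeq]
        nlinarith
      have hb : m' ≤ 2 * (m * M2) := by
        have h1 : m' ≤ zbk b := min_le_right _ _
        have h2 : zbk b ≤ zbk c + pdist b c := EWAux.zbk_le b c
        have h2' : pdist b c = pdist c b := EWAux.pdist_comm b c
        have h3 : pdist c b ≤ M2 := le_max_left _ _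
        have h4 : (1:ℝ) ≤ zbk c := EWAux.one_le_zbk c
        rw [hmeq]
        nlinarith
      rcases le_total M1 M2 with h' | h'
      · rw [min_eq_left h']; exact ha
      · rw [min_eq_right h']; exact hb
  -- key polynomial inequality
  have hK : M ^ γ₂ * m' ^ ϰ ≤ C * (M1 ^ γ₂ * (M2 ^ γ₂ * m ^ ϰ)) := by
    have step1 : M ^ γ₂ ≤ (2 * max M1 M2) ^ γ₂ :=
      Real.rpow_le_rpow (by linarith) hM hγ₂
    have step2 : m' ^ ϰ ≤ (2 * (m * min M1 M2)) ^ ϰ :=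
      Real.rpow_le_rpow (by linarith) hm hϰ
    have hmaxmin : max M1 M2 * min M1 M2 = M1 * M2 := by
      rcases le_total M1 M2 with h' | h'
      · rw [max_eq_right h', min_eq_left h', mul_comm]
      · rw [max_eq_left h', min_eq_right h']
    calc M ^ γ₂ * m' ^ ϰ
        ≤ (2 * max M1 M2) ^ γ₂ * (2 * (m * min M1 M2)) ^ ϰ :=
          mul_le_mul step1 step2 (Real.rpow_nonneg (by linarith) _)
            (Real.rpow_nonneg (by positivity) _)
      _ = 2 ^ γ₂ * 2 ^ ϰ * ((max M1 M2) ^ γ₂ * (min M1 M2) ^ ϰ) * m ^ ϰ := by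
          rw [Real.mul_rpow (by norm_num) (by positivity),
            Real.mul_rpow (by norm_num) (by positivity),
            Real.mul_rpow (by positivity) (by positivity)]
          ring
      _ ≤ 2 ^ γ₂ * 2 ^ ϰ * ((max M1 M2) ^ γ₂ * (min M1 M2) ^ γ₂) * m ^ ϰ := by
          have hexp : (min M1 M2) ^ ϰ ≤ (min M1 M2) ^ γ₂ :=
            Real.rpow_le_rpow_of_exponent_le hmin1 (by linarith)
          have h20 : (0:ℝ) ≤ 2 ^ γ₂ * 2 ^ ϰ := by positivity
          have hmx : (0:ℝ) ≤ (max M1 M2) ^ γ₂ := Real.rpow_nonneg (by linarith) _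
          have hmϰ : (0:ℝ) ≤ m ^ ϰ := Real.rpow_nonneg (by linarith) _
          have key := mul_le_mul_of_nonneg_left hexp hmx
          have key2 := mul_le_mul_of_nonneg_right key hmϰ
          have key3 := mul_le_mul_of_nonneg_left key2 h20
          linarith [key3]
      _ = C * (M1 ^ γ₂ * (M2 ^ γ₂ * m ^ ϰ)) := by
          rw [hC, Real.rpow_add (by norm_num : (0:ℝ) < 2),
            ← Real.mul_rpow (by linarith : (0:ℝ) ≤ max M1 M2) (by linarith : (0:ℝ) ≤ min M1 M2),
            hmaxmin,
            Real.mul_rpow (by linarith : (0:ℝ) ≤ M1) (by linarith : (0:ℝ) ≤ M2)]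
          ring
  -- assemble
  unfold eWeight
  rw [Real.rpow_zero, mul_one]
  have hfinal : Real.exp (γ₁ * pdist a b) * (M ^ γ₂ * m' ^ ϰ) ≤
      (Real.exp (γ₁ * pdist a c) * Real.exp (γ₁ * pdist c b)) *
        (C * (M1 ^ γ₂ * (M2 ^ γ₂ * m ^ ϰ))) :=
    mul_le_mul hEexp hK (by positivity) (by positivity)
  calc C * Real.exp (γ₁ * pdist a b) * M ^ γ₂ * m' ^ ϰ
      = C * (Real.exp (γ₁ * pdist a b) * (M ^ γ₂ * m' ^ ϰ)) := by ring
    _ ≤ C * ((Real.exp (γ₁ * pdist a c) * Real.exp (γ₁ * pdist c b)) *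
        (C * (M1 ^ γ₂ * (M2 ^ γ₂ * m ^ ϰ)))) :=
        mul_le_mul_of_nonneg_left hfinal hC0
    _ = C * Real.exp (γ₁ * pdist a c) * M1 ^ γ₂ *
        (C * Real.exp (γ₁ * pdist c b) * M2 ^ γ₂ * m ^ ϰ) := by ring
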